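/- For a Jacobi matrix J with π-normalized diagonalization J = Q_πᵀ Λ^π Q_π, the norming constants w_{π(i)} = |(Q_π)_{i,1}| satisfy w_{π(i)} = w_{π(1)} · |β₁^π ⋯ β_{i−1}^π| / |(λᵢ^π − λ₁^π) ⋯ (λᵢ^π − λ_{i−1}^π)| for 2 ≤ i ≤ n, where βᵢ^π are the bidiagonal coordinates of J. -/

import Mathlib

open Matrix
open Fin.NatCast

/-- `L` is lower triangular with unit diagonal. -/
def IsUnipLower {n : ℕ} (L : Matrix (Fin n) (Fin n) ℝ) : Prop :=
  (∀ i j : Fin n, i < j → L i j = 0) ∧ ∀ i : Fin n, L i i = 1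

/-- `U` is upper triangular with strictly positive diagonal. -/
def IsUpperTriPos {n : ℕ} (U : Matrix (Fin n) (Fin n) ℝ) : Prop :=
  (∀ i j : Fin n, j < i → U i j = 0) ∧ ∀ i : Fin n, 0 < U i i

/-- The leading principal minor of order `k` of `M`. -/
def leadingMinor {n : ℕ} (M : Matrix (Fin n) (Fin n) ℝ) (k : ℕ) (h : k ≤ n) : ℝ :=
  (Matrix.of fun i j : Fin k => M (Fin.castLE h i) (Fin.castLE h j)).det

/-- `M` is LU-positive: all leading principal minors are strictly positive. -/
def LUPositive {n : ℕ} (M : Matrix (Fin n) (Fin n) ℝ) : Prop :=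
  ∀ k (h : k ≤ n), 0 < leadingMinor M k h

/-- `Q` is orthogonal. -/
def IsOrth {n : ℕ} (Q : Matrix (Fin n) (Fin n) ℝ) : Prop := Qᵀ * Q = 1

/-- `E` is a sign diagonal `diag(±1, …, ±1)`. -/
def IsSignDiag {n : ℕ} (E : Matrix (Fin n) (Fin n) ℝ) : Prop :=
  (∀ i j : Fin n, i ≠ j → E i j = 0) ∧ ∀ i : Fin n, E i i = 1 ∨ E i i = -1

/-- `M` is tridiagonal. -/
def IsTridiag {n : ℕ} (M : Matrix (Fin n) (Fin n) ℝ) : Prop :=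
  ∀ i j : Fin n, ((i : ℕ) + 1 < (j : ℕ) ∨ (j : ℕ) + 1 < (i : ℕ)) → M i j = 0

/-- For a Jacobi matrix `J` with `π`-normalized diagonalization `J = Q_πᵀ Λ^π Q_π`,
the norming constants `w_{π(i)} = |(Q_π)_{i,1}|` satisfy
`w_{π(i)} = w_{π(1)} · |β₁ ⋯ β_{i-1}| / |(λᵢ^π − λ₁^π) ⋯ (λᵢ^π − λ_{i-1}^π)|`,
where the `βᵢ` are the bidiagonal coordinates of `J`. -/
theorem stmt14 (n : ℕ) (lam : Fin (n + 1) → ℝ) (hlam : StrictMono lam)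
    (π : Equiv.Perm (Fin (n + 1)))
    (J Qπ L U B : Matrix (Fin (n + 1)) (Fin (n + 1)) ℝ)
    (hsym : Jᵀ = J) (htri : IsTridiag J)
    (hpos : ∀ i j : Fin (n + 1), (i : ℕ) = (j : ℕ) + 1 → 0 < J i j)
    (hQ : IsOrth Qπ) (hLUpos : LUPositive Qπ)
    (hdiag : J = Qπᵀ * Matrix.diagonal (fun i => lam (π i)) * Qπ)
    (hQLU : Qπ = L * U) (hL : IsUnipLower L) (hU : IsUpperTriPos U)
    (hB : L * B = Matrix.diagonal (fun i => lam (π i)) * L)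
    (hBlow : ∀ i j : Fin (n + 1), (i : ℕ) ≠ (j : ℕ) → (i : ℕ) ≠ (j : ℕ) + 1 → B i j = 0)
    (βf : Fin (n + 1) → ℝ)
    (hβ : ∀ k : Fin (n + 1), ∀ hk : (k : ℕ) + 1 < n + 1, βf k = B ⟨(k : ℕ) + 1, hk⟩ k) :
    ∀ i : Fin (n + 1),
      |Qπ i 0| = |Qπ 0 0| * |∏ k ∈ Finset.Iio i, βf k| /
        |∏ k ∈ Finset.Iio i, (lam (π i) - lam (π k))| := by
  intro i
  -- the diagonal of B is the spectrum
  have hBdiag : ∀ k : Fin (n + 1), B k k = lam (π k) := by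
    intro k
    have h := congrFun (congrFun hB k) k
    rw [Matrix.mul_apply, Matrix.diagonal_mul] at h
    rw [Finset.sum_eq_single k] at h
    · rw [hL.2 k] at h
      simpa using h
    · intro j _ hj
      rcases lt_or_gt_of_ne hj with hlt | hgt
      · have hv : (j : ℕ) < (k : ℕ) := hlt
        rw [hBlow j k (by omega) (by omega)]
        ring
      · rw [hL.1 k j hgt]; ring
    · intro h; exact absurd (Finset.mem_univ k) h
  -- the three-term recursion on column entries of L
  have hrec : ∀ m : ℕ, m < n →
      (lam (π i) - lam (π (m : Fin (n + 1)))) * L i (m : Fin (n + 1))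
        = βf (m : Fin (n + 1)) * L i ((m + 1 : ℕ) : Fin (n + 1)) := by
    intro m hm
    have hm1 : m < n + 1 := by omega
    have hm2 : m + 1 < n + 1 := by omega
    set k : Fin (n + 1) := (m : Fin (n + 1)) with hk
    set k' : Fin (n + 1) := ((m + 1 : ℕ) : Fin (n + 1)) with hk'
    have hkv : (k : ℕ) = m := Fin.val_cast_of_lt hm1
    have hk'v : (k' : ℕ) = m + 1 := Fin.val_cast_of_lt hm2
    have hkne : k ≠ k' := by
      intro h
      rw [h] at hkv
      omega
    have h := congrFun (congrFun hB i) k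
    rw [Matrix.mul_apply, Matrix.diagonal_mul] at h
    have hpair : ∑ j ∈ ({k, k'} : Finset (Fin (n + 1))), L i j * B j k
        = L i k * B k k + L i k' * B k' k := Finset.sum_pair hkne
    have hsum : ∑ j, L i j * B j k = L i k * B k k + L i k' * B k' k := by
      rw [← hpair]
      symm
      apply Finset.sum_subset (Finset.subset_univ _)
      intro j _ hj
      simp only [Finset.mem_insert, Finset.mem_singleton, not_or] at hj
      have hj1 : (j : ℕ) ≠ m := by
        intro he
        exact hj.1 (Fin.ext (by rw [he, hkv]))
      have hj2 : (j : ℕ) ≠ m + 1 := by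
        intro he
        exact hj.2 (Fin.ext (by rw [he, hk'v]))
      rw [hBlow j k (by omega) (by omega)]
      ring
    have hBk' : B k' k = βf k := by
      rw [hβ k (by omega)]
      congr 1
      apply Fin.ext
      simp only [hk'v, hkv]
    rw [hsum, hBdiag k, hBk'] at h
    linear_combination -h
  -- the key telescoping identity
  have key : ∀ d m : ℕ, m + d = (i : ℕ) →
      L i (m : Fin (n + 1)) *
          ∏ t ∈ Finset.range d, (lam (π i) - lam (π ((m + t : ℕ) : Fin (n + 1))))
        = ∏ t ∈ Finset.range d, βf ((m + t : ℕ) : Fin (n + 1)) := by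
    intro d
    induction d with
    | zero =>
      intro m hm
      have : ((m : ℕ) : Fin (n + 1)) = i := by
        apply Fin.ext
        rw [Fin.val_cast_of_lt (by omega)]
        omega
      simp [this, hL.2 i]
    | succ d ih =>
      intro m hm
      have hmn : m < n := by
        have := i.isLt; omega
      have ih' := ih (m + 1) (by omega)
      have hrec' := hrec m hmn
      have hcongr1 : ∀ t ∈ Finset.range d,
          lam (π i) - lam (π ((m + (t + 1) : ℕ) : Fin (n + 1)))
            = lam (π i) - lam (π ((m + 1 + t : ℕ) : Fin (n + 1))) := by
        intro t _
        rw [show m + (t + 1) = m + 1 + t by omega]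
      have hcongr2 : ∀ t ∈ Finset.range d,
          βf ((m + (t + 1) : ℕ) : Fin (n + 1)) = βf ((m + 1 + t : ℕ) : Fin (n + 1)) := by
        intro t _
        rw [show m + (t + 1) = m + 1 + t by omega]
      rw [Finset.prod_range_succ', Finset.prod_range_succ',
        Finset.prod_congr rfl hcongr1, Finset.prod_congr rfl hcongr2]
      simp only [Nat.add_zero]
      linear_combination (∏ t ∈ Finset.range d,
          (lam (π i) - lam (π ((m + 1 + t : ℕ) : Fin (n + 1))))) * hrec'
        + βf ((m : ℕ) : Fin (n + 1)) * ih'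
  have hL0 : L i 0 * ∏ t ∈ Finset.range (i : ℕ), (lam (π i) - lam (π ((t : ℕ) : Fin (n + 1))))
      = ∏ t ∈ Finset.range (i : ℕ), βf ((t : ℕ) : Fin (n + 1)) := by
    have := key (i : ℕ) 0 (by omega)
    simpa using this
  -- convert Iio products to range products
  have hconv : ∀ f : Fin (n + 1) → ℝ,
      ∏ k ∈ Finset.Iio i, f k = ∏ t ∈ Finset.range (i : ℕ), f ((t : ℕ) : Fin (n + 1)) := by
    intro f
    refine Finset.prod_nbij' (fun k : Fin (n + 1) => (k : ℕ))
      (fun t : ℕ => ((t : ℕ) : Fin (n + 1))) ?_ ?_ ?_ ?_ ?_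
    · intro k hk
      simp only [Finset.mem_Iio] at hk
      simp only [Finset.mem_range]
      exact hk
    · intro t ht
      simp only [Finset.mem_range] at ht
      simp only [Finset.mem_Iio]
      have := i.isLt
      exact Fin.lt_def.mpr (by rw [Fin.val_cast_of_lt (by omega)]; exact ht)
    · intro k _
      exact Fin.cast_val_eq_self k
    · intro t ht
      simp only [Finset.mem_range] at ht
      have := i.isLt
      exact Fin.val_cast_of_lt (by omega)
    · intro k _
      rw [Fin.cast_val_eq_self k]
  -- first column of Q in terms of L and U
  have hQcol : ∀ j : Fin (n + 1), Qπ j 0 = L j 0 * U 0 0 := by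
    intro j
    rw [hQLU, Matrix.mul_apply]
    apply Finset.sum_eq_single 0
    · intro b _ hb
      rw [hU.1 b 0 (Fin.pos_of_ne_zero hb)]
      ring
    · intro h; exact absurd (Finset.mem_univ 0) h
  have hQ00 : Qπ 0 0 = U 0 0 := by
    rw [hQcol 0, hL.2 0, one_mul]
  -- nonvanishing of the eigenvalue differences
  have hΔ : ∏ k ∈ Finset.Iio i, (lam (π i) - lam (π k)) ≠ 0 := by
    apply Finset.prod_ne_zero_iff.mpr
    intro k hk
    simp only [Finset.mem_Iio] at hk
    have : π k ≠ π i := fun h => absurd (π.injective h) (ne_of_lt hk)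
    exact sub_ne_zero.mpr fun h => this (hlam.injective h.symm)
  rw [eq_div_iff (abs_ne_zero.mpr hΔ), ← abs_mul, ← abs_mul]
  congr 1
  rw [hQcol i, hQ00, hconv (fun k => lam (π i) - lam (π k)), hconv βf]
  linear_combination U 0 0 * hL0
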